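/- Let G be a group satisfying max-n (every increasing chain of normal subgroups stabilizes) such that every quotient group of G is residually finite. Then cb(G) = sup{cb(G/N) + 1 : N an infinite normal subgroup of G}. -/

import Mathlib

noncomputable section

/-- Chabauty topology on the set of subgroups of `G`: the topology induced from the
product topology on `{0,1}^G` via indicator functions. -/
noncomputable instance chabautyTopology {G : Type*} [Group G] : TopologicalSpace (Subgroup G) :=
  TopologicalSpace.induced (fun N g => @decide (g ∈ N) (Classical.propDecidable _))
    (inferInstance : TopologicalSpace (G → Bool))

/-- Iterated Cantor–Bendixson derivatives of the space `X`:
`X^(0) = X`, `X^(α+1)` is the set of accumulation points of `X^(α)`, and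
`X^(λ) = ⋂_{β<λ} X^(β)` for limit `λ`. -/
noncomputable def cbD (X : Type*) [TopologicalSpace X] (o : Ordinal) : Set X :=
  Ordinal.limitRecOn o Set.univ (fun _ ih => {x | AccPt x (Filter.principal ih)})
    (fun o _ ih => ⋂ β : Set.Iio o, ih β.1 β.2)

/-- The point `x` has Cantor–Bendixson rank exactly `α` in `X`: it belongs to the `α`-th
derivative but not to the `(α+1)`-st (so `α` is the largest ordinal with `x ∈ X^(α)`). -/
def CBRankEq {X : Type*} [TopologicalSpace X] (x : X) (α : Ordinal) : Prop :=
  x ∈ cbD X α ∧ x ∉ cbD X (α + 1)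

/-- The Cantor–Bendixson rank of a point: the largest `α` with `x ∈ X^(α)`
(the set of such `α` is an initial segment of the ordinals, closed under limits). -/
noncomputable def cbRank {X : Type*} [TopologicalSpace X] (x : X) : Ordinal :=
  sSup {α | x ∈ cbD X α}

/-- The trivial subgroup, as a point of the space `𝒩(G)` of normal subgroups of `G`
(with its Chabauty topology); `cb(G)` is the Cantor–Bendixson rank of this point. -/
def nsBot (G : Type*) [Group G] : {N : Subgroup G // N.Normal} := ⟨⊥, inferInstance⟩

universe u

section CBD

variable {X : Type*} [TopologicalSpace X]

theorem cbD_zero : cbD X 0 = Set.univ := Ordinal.limitRecOn_zero _ _ _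

theorem cbD_succ (o : Ordinal) : cbD X (o + 1) = {x | AccPt x (Filter.principal (cbD X o))} := by
  rw [cbD, Ordinal.add_one_eq_succ, Ordinal.limitRecOn_succ]
  rfl

theorem cbD_limit {o : Ordinal} (h : Order.IsSuccLimit o) :
    cbD X o = ⋂ β : Set.Iio o, cbD X β.1 :=
  Ordinal.limitRecOn_limit _ _ _ _ h

theorem isClosed_cbD [T1Space X] (o : Ordinal) : IsClosed (cbD X o) := by
  induction o using Ordinal.limitRecOn with
  | zero => rw [cbD_zero]; exact isClosed_univ
  | add_one o ih =>
    rw [cbD_succ]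
    exact isClosed_derivedSet (cbD X o)
  | limit o ho ih =>
    rw [cbD_limit ho]
    exact isClosed_iInter fun β => ih β.1 β.2

theorem cbD_succ_subset [T1Space X] (o : Ordinal) : cbD X (o + 1) ⊆ cbD X o := by
  rw [cbD_succ]
  intro x hx
  have : x ∈ closure (cbD X o) := mem_closure_iff_clusterPt.2 hx.clusterPt
  rwa [(isClosed_cbD (X := X) o).closure_eq] at this

theorem cbD_antitone [T1Space X] : Antitone (cbD X) := by
  intro a b hab
  induction b using Ordinal.limitRecOn with
  | zero =>
    have : a = 0 := le_antisymm (by simpa using hab) (zero_le (a := a))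
    simp [this]
  | add_one o ih =>
    rcases eq_or_lt_of_le hab with rfl | h
    · exact le_rfl
    · have : a ≤ o := Order.le_of_lt_succ h
      exact le_trans (cbD_succ_subset o) (ih this)
  | limit o ho ih =>
    rcases eq_or_lt_of_le hab with rfl | h
    · exact le_rfl
    · rw [cbD_limit ho]
      exact Set.iInter_subset_of_subset ⟨a, h⟩ le_rfl

theorem mem_cbD_limit {o : Ordinal} (ho : Order.IsSuccLimit o) {x : X} :
    x ∈ cbD X o ↔ ∀ β < o, x ∈ cbD X β := by
  rw [cbD_limit ho]
  simp [Set.mem_iInter]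

end CBD

namespace CBProof
open Topology Filter

open Topology Filter

variable {G : Type u} [Group G]

/-- indicator map of a subtype of subgroups -/
def nsInd {P : Subgroup G → Prop} : {K : Subgroup G // P K} → G → Bool :=
  fun K g => @decide (g ∈ K.1) (Classical.propDecidable _)

theorem nsInd_injective {P : Subgroup G → Prop} :
    Function.Injective (nsInd (G := G) (P := P)) := by
  intro K K' h
  apply Subtype.ext
  apply SetLike.ext
  intro g
  have := congrFun h g
  simpa [nsInd, decide_eq_decide] using this

theorem isEmbedding_nsInd {P : Subgroup G → Prop} :
    Topology.IsEmbedding (nsInd (G := G) (P := P)) := by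
  refine ⟨⟨?_⟩, nsInd_injective⟩
  show instTopologicalSpaceSubtype = _
  rw [instTopologicalSpaceSubtype, chabautyTopology, induced_compose]
  rfl

instance {P : Subgroup G → Prop} : T1Space {K : Subgroup G // P K} :=
  isEmbedding_nsInd.t1Space

theorem nhds_eq {P : Subgroup G → Prop} (K : {K : Subgroup G // P K}) :
    𝓝 K = Filter.comap nsInd (𝓝 (nsInd K)) :=
  isEmbedding_nsInd.toIsInducing.nhds_eq_comap K

theorem mem_nhds_iff_finset {P : Subgroup G → Prop} (K : {K : Subgroup G // P K})
    (U : Set {K : Subgroup G // P K}) :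
    U ∈ 𝓝 K ↔ ∃ F : Finset G, {K' | ∀ g ∈ F, (g ∈ K'.1 ↔ g ∈ K.1)} ⊆ U := by
  constructor
  · intro hU
    rw [nhds_eq, Filter.mem_comap] at hU
    obtain ⟨V, hV, hsub⟩ := hU
    rw [nhds_pi] at hV
    rw [Filter.mem_pi] at hV
    obtain ⟨I, hIfin, t, ht, hsub2⟩ := hV
    refine ⟨hIfin.toFinset, fun K' hK' => ?_⟩
    apply hsub
    show nsInd K' ∈ V
    apply hsub2
    intro g hg
    have hgI : g ∈ hIfin.toFinset := hIfin.mem_toFinset.2 hg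
    have : nsInd K' g = nsInd K g := by
      simp only [nsInd, decide_eq_decide]
      exact hK' g hgI
    rw [this]
    have := ht g
    rw [nhds_discrete, Filter.mem_pure] at this
    exact this
  · rintro ⟨F, hF⟩
    refine Filter.mem_of_superset ?_ hF
    rw [nhds_eq, Filter.mem_comap]
    refine ⟨{f : G → Bool | ∀ g ∈ F, f g = nsInd K g}, ?_, ?_⟩
    · have hopen : IsOpen {f : G → Bool | ∀ g ∈ F, f g = nsInd K g} := by
        have : {f : G → Bool | ∀ g ∈ F, f g = nsInd K g} =
            ⋂ g ∈ F, (fun f : G → Bool => f g) ⁻¹' {nsInd K g} := by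
          ext f; simp
        rw [this]
        exact isOpen_biInter_finset fun g _ =>
          (continuous_apply g).isOpen_preimage _ (isOpen_discrete _)
      exact hopen.mem_nhds (fun g _ => rfl)
    · intro K' hK' g hg
      have : nsInd K' g = nsInd K g := hK' g hg
      simpa [nsInd, decide_eq_decide] using this



variable {G : Type u} [Group G]

/-- max-n: every normal subgroup is the normal closure of a finite subset. -/
theorem exists_finset_normalClosure
    (hmax : WellFounded ((· > ·) :
      {N : Subgroup G // N.Normal} → {N : Subgroup G // N.Normal} → Prop))
    (N : Subgroup G) (hN : N.Normal) :
    ∃ T : Finset G, (↑T : Set G) ⊆ (N : Set G) ∧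
      ∀ K : Subgroup G, K.Normal → (↑T : Set G) ⊆ (K : Set G) → N ≤ K := by
  haveI := hN
  set S : Set {N' : Subgroup G // N'.Normal} :=
    {M | ∃ T : Finset G, (↑T : Set G) ⊆ (N : Set G) ∧
      M.1 = Subgroup.normalClosure (↑T : Set G)} with hS
  have hne : S.Nonempty := by
    refine ⟨⟨Subgroup.normalClosure (↑(∅ : Finset G) : Set G),
      Subgroup.normalClosure_normal⟩, ⟨∅, by simp, rfl⟩⟩
  obtain ⟨m, hmS, hmin⟩ := hmax.has_min S hne
  obtain ⟨T, hT, hTeq⟩ := hmS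
  have hle : m.1 ≤ N := by
    rw [hTeq]
    exact Subgroup.normalClosure_le_normal hT
  have heq : m.1 = N := by
    by_contra hne'
    haveI := Classical.decEq G
    obtain ⟨g, hgN, hgm⟩ : ∃ g ∈ N, g ∉ m.1 := by
      by_contra h
      push_neg at h
      exact hne' (le_antisymm hle h)
    set T' : Finset G := insert g T with hT'
    have hT'sub : (↑T' : Set G) ⊆ (N : Set G) := by
      rw [hT']
      push_cast
      exact Set.insert_subset hgN hT
    have hmem : (⟨Subgroup.normalClosure (↑T' : Set G),
        Subgroup.normalClosure_normal⟩ : {N' : Subgroup G // N'.Normal}) ∈ S :=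
      ⟨T', hT'sub, rfl⟩
    refine hmin _ hmem ?_
    show m < _
    rw [← Subtype.coe_lt_coe]
    refine lt_of_le_of_ne ?_ ?_
    · rw [hTeq]
      exact Subgroup.normalClosure_mono (by
        push_cast [hT']
        exact Set.subset_insert _ _)
    · intro h
      apply hgm
      rw [h]
      exact Subgroup.subset_normalClosure (by simp [hT'])
  refine ⟨T, hT, fun K hK hTK => ?_⟩
  haveI := hK
  rw [← heq, hTeq]
  exact Subgroup.normalClosure_le_normal hTK


section Char
variable {G : Type u} [Group G]

/-- Characterization of accumulation points in spaces of normal subgroups, under max-n. -/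
theorem accPt_char
    (hmax : WellFounded ((· > ·) :
      {N : Subgroup G // N.Normal} → {N : Subgroup G // N.Normal} → Prop))
    {P : Subgroup G → Prop} (hP : ∀ K, P K → K.Normal)
    (K : {K : Subgroup G // P K}) (S : Set {K : Subgroup G // P K}) :
    AccPt K (𝓟 S) ↔ ∀ F : Finset G, (∀ g ∈ F, g ∉ K.1) →
      ∃ K' ∈ S, K'.1 ≠ K.1 ∧ K.1 ≤ K'.1 ∧ ∀ g ∈ F, g ∉ K'.1 := by
  haveI := Classical.decEq G
  rw [accPt_iff_nhds]
  constructor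
  · intro h F hF
    obtain ⟨T, hTsub, hTprop⟩ := exists_finset_normalClosure hmax K.1 (hP _ K.2)
    set U : Set {K : Subgroup G // P K} :=
      {K' | ∀ g ∈ T ∪ F, (g ∈ K'.1 ↔ g ∈ K.1)} with hU
    have hUnhds : U ∈ 𝓝 K := by
      rw [mem_nhds_iff_finset]
      exact ⟨T ∪ F, le_refl _⟩
    obtain ⟨y, ⟨hyU, hyS⟩, hyne⟩ := h U hUnhds
    refine ⟨y, hyS, fun hh => hyne (Subtype.ext hh), ?_, ?_⟩
    · apply hTprop y.1 (hP _ y.2)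
      intro g hg
      exact (hyU g (Finset.mem_union_left _ (by exact_mod_cast hg))).2 (hTsub hg)
    · intro g hg hgy
      exact hF g hg ((hyU g (Finset.mem_union_right _ hg)).1 hgy)
  · intro h U hU
    obtain ⟨F, hFsub⟩ := (mem_nhds_iff_finset K U).1 hU
    letI : DecidablePred (fun g : G => g ∉ K.1) := fun _ => Classical.propDecidable _
    obtain ⟨K', hK'S, hne, hle, havoid⟩ :=
      h (F.filter (fun g => g ∉ K.1)) (fun g hg => (Finset.mem_filter.1 hg).2)
    refine ⟨K', ⟨hFsub ?_, hK'S⟩, fun hh => hne (congrArg Subtype.val hh)⟩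
    intro g hg
    by_cases hgK : g ∈ K.1
    · exact ⟨fun _ => hgK, fun _ => hle hgK⟩
    · have : g ∉ K'.1 := havoid g (Finset.mem_filter.2 ⟨hg, hgK⟩)
      exact ⟨fun hh => absurd hh this, fun hh => absurd hh hgK⟩

/-- Under max-n, every point has bounded Cantor–Bendixson level. -/
theorem exists_not_mem_cbD
    (hmax : WellFounded ((· > ·) :
      {N : Subgroup G // N.Normal} → {N : Subgroup G // N.Normal} → Prop))
    (K : {N : Subgroup G // N.Normal}) :
    ∃ β : Ordinal.{u}, K ∉ cbD {N : Subgroup G // N.Normal} β := by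
  induction K using WellFounded.induction hmax with
  | _ K IH =>
  have f : ∀ y : {y : {N : Subgroup G // N.Normal} // y > K},
      ∃ β : Ordinal.{u}, y.1 ∉ cbD {N : Subgroup G // N.Normal} β :=
    fun y => IH y.1 y.2
  choose f' hf' using f
  set β₀ : Ordinal.{u} := ⨆ y, f' y with hβ₀
  have hbdd : BddAbove (Set.range f') := Ordinal.bddAbove_range _
  refine ⟨β₀ + 1, fun hmem => ?_⟩
  rw [cbD_succ] at hmem
  simp only [Set.mem_setOf_eq] at hmem
  rw [accPt_char hmax (fun _ h => h)] at hmem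
  obtain ⟨K', hK'mem, hne, hle, -⟩ := hmem ∅ (by simp)
  have hKK' : K' > K := lt_of_le_of_ne (Subtype.coe_le_coe.1 hle) (fun hh => hne (congrArg Subtype.val hh).symm)
  have h1 : f' ⟨K', hKK'⟩ ≤ β₀ := le_ciSup hbdd ⟨K', hKK'⟩
  exact hf' ⟨K', hKK'⟩ (cbD_antitone h1 hK'mem)

end Char

section Algebra
open Pointwise

/-- Under max-n there is a largest finite normal subgroup. -/
theorem exists_max_finite_normal {H : Type*} [Group H]
    (hmaxH : WellFounded ((· > ·) :
      {N : Subgroup H // N.Normal} → {N : Subgroup H // N.Normal} → Prop)) :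
    ∃ R : Subgroup H, R.Normal ∧ (R : Set H).Finite ∧
      ∀ K : Subgroup H, K.Normal → (K : Set H).Finite → K ≤ R := by
  set A : Set {N : Subgroup H // N.Normal} := {M | (M.1 : Set H).Finite} with hA
  have hne : A.Nonempty := ⟨⟨⊥, inferInstance⟩, by simp [hA]⟩
  obtain ⟨m, hmA, hmin⟩ := hmaxH.has_min A hne
  refine ⟨m.1, m.2, hmA, fun K hK hKfin => ?_⟩
  haveI := hK; haveI := m.2
  have hfin : ((K ⊔ m.1 : Subgroup H) : Set H).Finite := by
    rw [Subgroup.mul_normal]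
    exact hKfin.mul hmA
  have hmem : (⟨K ⊔ m.1, Subgroup.sup_normal K m.1⟩ : {N : Subgroup H // N.Normal}) ∈ A := hfin
  have : ¬ (⟨K ⊔ m.1, Subgroup.sup_normal K m.1⟩ : {N : Subgroup H // N.Normal}) > m :=
    hmin _ hmem
  have heq : K ⊔ m.1 = m.1 := by
    by_contra hne'
    exact this (lt_of_le_of_ne (Subtype.coe_le_coe.1 le_sup_right) (fun hh => hne'
      (congrArg Subtype.val hh).symm))
  calc K ≤ K ⊔ m.1 := le_sup_left
    _ = m.1 := heq

/-- The set of subgroups contained in a finite subgroup is finite. -/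
theorem finite_setOf_le_of_finite {H : Type*} [Group H] {R : Subgroup H}
    (hR : (R : Set H).Finite) : {M : Subgroup H | M ≤ R}.Finite := by
  apply Set.Finite.of_finite_image (f := fun M : Subgroup H => (M : Set H))
  · apply Set.Finite.subset hR.finite_subsets
    rintro s ⟨M, hM, rfl⟩
    exact SetLike.coe_subset_coe.2 hM
  · exact SetLike.coe_injective.injOn

variable {G : Type u} [Group G]

/-- max-n passes to quotients. -/
theorem hmax_quotient
    (hmax : WellFounded ((· > ·) :
      {N : Subgroup G // N.Normal} → {N : Subgroup G // N.Normal} → Prop))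
    (N : Subgroup G) [hN : N.Normal] :
    WellFounded ((· > ·) :
      {M : Subgroup (G ⧸ N) // M.Normal} → {M : Subgroup (G ⧸ N) // M.Normal} → Prop) := by
  have hsurj : Function.Surjective (QuotientGroup.mk' N) := QuotientGroup.mk'_surjective N
  set φ : {M : Subgroup (G ⧸ N) // M.Normal} → {N : Subgroup G // N.Normal} :=
    fun M => ⟨Subgroup.comap (QuotientGroup.mk' N) M.1, M.2.comap _⟩ with hφ
  have : Subrelation ((· > ·) : {M : Subgroup (G ⧸ N) // M.Normal} → _ → Prop)
      (InvImage ((· > ·)) φ) := by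
    intro a b hab
    show φ b < φ a
    rw [← Subtype.coe_lt_coe]
    rw [gt_iff_lt, ← Subtype.coe_lt_coe] at hab
    exact (Subgroup.comap_lt_comap_of_surjective hsurj).2 hab
  exact this.wf (InvImage.wf φ hmax)

end Algebra

section Fin
variable {G : Type u} [Group G]

theorem finite_quot {L : Subgroup G} (hL : L.index ≠ 0) : Finite (G ⧸ L) := by
  apply Nat.finite_of_card_ne_zero
  rwa [← Subgroup.index_eq_card]

/-- If `N ⊓ L = ⊥` with `L` of finite index, then `N` is finite. -/
theorem finite_of_inf_bot {N L : Subgroup G} (hL : L.index ≠ 0) (h : N ⊓ L = ⊥) :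
    (N : Set G).Finite := by
  haveI : Finite (G ⧸ L) := finite_quot hL
  refine Set.Finite.of_finite_image (f := fun g => ((g : G ⧸ L))) (Set.toFinite _) ?_
  intro a ha b hb hab
  have h1 : a⁻¹ * b ∈ L := (QuotientGroup.eq (s := L)).1 hab
  have h2 : a⁻¹ * b ∈ N := N.mul_mem (N.inv_mem ha) hb
  have : a⁻¹ * b ∈ N ⊓ L := ⟨h2, h1⟩
  rw [h] at this
  exact inv_mul_eq_one.1 (Subgroup.mem_bot.1 this)

/-- If `K ⊓ L ≤ N` with `L` of finite index, the image of `K` in `G ⧸ N` is finite. -/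
theorem image_mk_finite {N K L : Subgroup G} [hN : N.Normal] (hL : L.index ≠ 0)
    (h : K ⊓ L ≤ N) : ((QuotientGroup.mk '' (K : Set G)) : Set (G ⧸ N)).Finite := by
  haveI : Finite (G ⧸ L) := finite_quot hL
  have hcover : (QuotientGroup.mk '' (K : Set G) : Set (G ⧸ N)) ⊆
      ⋃ c : G ⧸ L, QuotientGroup.mk '' ((K : Set G) ∩ (fun g => ((g : G ⧸ L))) ⁻¹' {c}) := by
    rintro x ⟨k, hk, rfl⟩
    exact Set.mem_iUnion.2 ⟨(k : G ⧸ L), ⟨k, ⟨hk, rfl⟩, rfl⟩⟩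
  apply Set.Finite.subset _ hcover
  apply Set.finite_iUnion
  intro c
  apply Set.Subsingleton.finite
  rintro x ⟨k₁, ⟨hk₁, hc₁⟩, rfl⟩ y ⟨k₂, ⟨hk₂, hc₂⟩, rfl⟩
  have hL' : k₁⁻¹ * k₂ ∈ L := by
    apply (QuotientGroup.eq (s := L)).1
    simp only [Set.mem_preimage, Set.mem_singleton_iff] at hc₁ hc₂
    rw [hc₁, hc₂]
  have : k₁⁻¹ * k₂ ∈ N := h ⟨K.mul_mem (K.inv_mem hk₁) hk₂, hL'⟩
  exact (QuotientGroup.eq (s := N)).2 this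

end Fin

section ClaimB
variable {G : Type u} [Group G]

/-- Intersecting with a finite-index normal subgroup does not decrease CB level. -/
theorem inf_mem_cbD
    (hmax : WellFounded ((· > ·) :
      {N : Subgroup G // N.Normal} → {N : Subgroup G // N.Normal} → Prop))
    {L : Subgroup G} (hLn : L.Normal) (hLi : L.index ≠ 0) (α : Ordinal.{u}) :
    ∀ N : {N : Subgroup G // N.Normal}, N ∈ cbD {N : Subgroup G // N.Normal} α →
      (⟨N.1 ⊓ L, @Subgroup.normal_inf_normal G _ N.1 L N.2 hLn⟩ :
        {N : Subgroup G // N.Normal}) ∈ cbD {N : Subgroup G // N.Normal} α := by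
  haveI := hLn
  induction α using Ordinal.limitRecOn with
  | zero => intro N _; rw [cbD_zero]; trivial
  | add_one o ih =>
    intro N hN
    rw [cbD_succ] at hN ⊢
    simp only [Set.mem_setOf_eq] at hN ⊢
    rw [accPt_char hmax (fun _ h => h)] at hN ⊢
    intro F hF
    haveI := N.2
    have hmaxH := hmax_quotient hmax N.1
    obtain ⟨R, hRn, hRfin, hRmax⟩ := exists_max_finite_normal hmaxH
    -- hitting set for the finitely many cosets of `N` inside the preimage of `R`
    haveI := Classical.decEq G
    have hS0 : ((R : Set (G ⧸ N.1)) \ {1}).Finite := hRfin.diff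
    set T : Finset G := hS0.toFinset.image (fun h => h.out) with hT
    have hTN : ∀ g ∈ T, g ∉ N.1 := by
      intro g hg
      rw [hT, Finset.mem_image] at hg
      obtain ⟨h, hh, rfl⟩ := hg
      rw [Set.Finite.mem_toFinset] at hh
      intro hmem
      have h1 : ((h.out : G) : G ⧸ N.1) = 1 := (QuotientGroup.eq_one_iff _).2 hmem
      rw [QuotientGroup.out_eq'] at h1
      exact hh.2 h1
    letI : DecidablePred (fun g : G => g ∉ N.1) := fun _ => Classical.propDecidable _
    obtain ⟨K, hKcb, hKne, hKle, hKavoid⟩ :=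
      hN ((F.filter (fun g => g ∉ N.1)) ∪ T)
        (by
          intro g hg
          rcases Finset.mem_union.1 hg with hg | hg
          · exact (Finset.mem_filter.1 hg).2
          · exact hTN g hg)
    refine ⟨⟨K.1 ⊓ L, @Subgroup.normal_inf_normal G _ K.1 L K.2 hLn⟩, ih K hKcb, ?_, ?_, ?_⟩
    · -- K ⊓ L ≠ N ⊓ L
      intro heq
      simp only at heq
      have hKLN : K.1 ⊓ L ≤ N.1 := by rw [heq]; exact inf_le_left
      have himg : ((QuotientGroup.mk '' (K.1 : Set G)) : Set (G ⧸ N.1)).Finite :=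
        image_mk_finite hLi hKLN
      have hmapfin : ((Subgroup.map (QuotientGroup.mk' N.1) K.1 : Subgroup (G ⧸ N.1)) :
          Set (G ⧸ N.1)).Finite := by
        rw [Subgroup.coe_map]
        exact himg
      have hmapn : (Subgroup.map (QuotientGroup.mk' N.1) K.1).Normal :=
        K.2.map _ (QuotientGroup.mk'_surjective N.1)
      have hmapR : Subgroup.map (QuotientGroup.mk' N.1) K.1 ≤ R :=
        hRmax _ hmapn hmapfin
      obtain ⟨k, hkK, hkN⟩ : ∃ k ∈ K.1, k ∉ N.1 := by
        by_contra hcon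
        push_neg at hcon
        exact hKne (le_antisymm hcon hKle)
      have hkR : ((k : G ⧸ N.1)) ∈ R := hmapR ⟨k, hkK, rfl⟩
      have hk1 : ((k : G ⧸ N.1)) ≠ 1 := fun hh => hkN ((QuotientGroup.eq_one_iff k).1 hh)
      set t : G := Quotient.out ((k : G ⧸ N.1)) with ht'
      have htT : t ∈ T := by
        rw [hT, Finset.mem_image]
        exact ⟨(k : G ⧸ N.1), (Set.Finite.mem_toFinset _).2 ⟨hkR, hk1⟩, rfl⟩
      have htk : ((t : G ⧸ N.1)) = ((k : G ⧸ N.1)) := QuotientGroup.out_eq' _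
      have htK : t ∈ K.1 := by
        have h1 : t⁻¹ * k ∈ N.1 := (QuotientGroup.eq (s := N.1)).1 htk
        have h2 : t⁻¹ * k ∈ K.1 := hKle h1
        have h3 : t⁻¹ ∈ K.1 := by
          have := K.1.mul_mem h2 (K.1.inv_mem hkK)
          simpa [mul_assoc] using this
        simpa using K.1.inv_mem h3
      exact hKavoid t (Finset.mem_union_right _ htT) htK
    · exact inf_le_inf_right L hKle
    · intro g hg
      by_cases hgN : g ∈ N.1
      · intro hgKL
        exact hF g hg ⟨hgN, hgKL.2⟩
      · intro hgKL
        exact hKavoid g (Finset.mem_union_left _ (Finset.mem_filter.2 ⟨hg, hgN⟩)) hgKL.1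
  | limit o ho ih =>
    intro N hN
    rw [mem_cbD_limit ho] at hN ⊢
    intro β hβ
    exact ih β hβ N (hN β hβ)

end ClaimB

section Master
variable {G : Type u} [Group G]

theorem exists_finiteIndex_avoiding
    (hres : ∀ N : Subgroup G, N.Normal → ∀ g ∉ N,
      ∃ K : Subgroup G, K.Normal ∧ N ≤ K ∧ K.index ≠ 0 ∧ g ∉ K)
    (F : Finset G) (hF : ∀ g ∈ F, g ≠ 1) :
    ∃ L : Subgroup G, L.Normal ∧ L.index ≠ 0 ∧ ∀ g ∈ F, g ∉ L := by
  haveI := Classical.decEq G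
  induction F using Finset.induction_on with
  | empty => exact ⟨⊤, inferInstance, by rw [Subgroup.index_top]; exact one_ne_zero, by simp⟩
  | insert a F' ha ih =>
    obtain ⟨L, hLn, hLi, hLav⟩ := ih (fun g hg => hF g (Finset.mem_insert_of_mem hg))
    have haB : a ∉ (⊥ : Subgroup G) := by
      rw [Subgroup.mem_bot]
      exact hF a (Finset.mem_insert_self a F')
    obtain ⟨K, hKn, -, hKi, hKa⟩ := hres ⊥ inferInstance a haB
    refine ⟨K ⊓ L, @Subgroup.normal_inf_normal G _ K L hKn hLn,
      Subgroup.index_inf_ne_zero hKi hLi, ?_⟩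
    intro g hg
    rcases Finset.mem_insert.1 hg with rfl | hg
    · exact fun hmem => hKa hmem.1
    · exact fun hmem => hLav g hg hmem.2

/-- Master lemma, ⇐ direction. -/
theorem bot_mem_cbD_succ_of_infinite
    (hmax : WellFounded ((· > ·) :
      {N : Subgroup G // N.Normal} → {N : Subgroup G // N.Normal} → Prop))
    (hres : ∀ N : Subgroup G, N.Normal → ∀ g ∉ N,
      ∃ K : Subgroup G, K.Normal ∧ N ≤ K ∧ K.index ≠ 0 ∧ g ∉ K)
    {N : {N : Subgroup G // N.Normal}} (hNinf : (N.1 : Set G).Infinite) (α : Ordinal.{u})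
    (hN : N ∈ cbD {N : Subgroup G // N.Normal} α) :
    nsBot G ∈ cbD {N : Subgroup G // N.Normal} (α + 1) := by
  rw [cbD_succ]
  simp only [Set.mem_setOf_eq]
  rw [accPt_char hmax (fun _ h => h)]
  intro F hF
  obtain ⟨L, hLn, hLi, hLav⟩ := exists_finiteIndex_avoiding hres F
    (fun g hg hg1 => hF g hg (show g ∈ (⊥ : Subgroup G) from Subgroup.mem_bot.2 hg1))
  refine ⟨⟨N.1 ⊓ L, @Subgroup.normal_inf_normal G _ N.1 L N.2 hLn⟩,
    inf_mem_cbD hmax hLn hLi α N hN, ?_, bot_le, ?_⟩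
  · intro heq
    exact hNinf (finite_of_inf_bot hLi heq)
  · intro g hg hmem
    exact hLav g hg hmem.2

/-- Master lemma, ⇒ direction. -/
theorem exists_infinite_of_bot_mem
    (hmax : WellFounded ((· > ·) :
      {N : Subgroup G // N.Normal} → {N : Subgroup G // N.Normal} → Prop))
    (α : Ordinal.{u}) (h : nsBot G ∈ cbD {N : Subgroup G // N.Normal} (α + 1)) :
    ∃ N : {N : Subgroup G // N.Normal}, (N.1 : Set G).Infinite ∧
      N ∈ cbD {N : Subgroup G // N.Normal} α := by
  classical
  by_contra hcon
  push_neg at hcon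
  have hallfin : ∀ N : {N : Subgroup G // N.Normal},
      N ∈ cbD {N : Subgroup G // N.Normal} α → (N.1 : Set G).Finite := by
    intro N hN
    rw [← Set.not_infinite]
    exact fun hinf => (hcon N hinf) hN
  obtain ⟨R, hRn, hRfin, hRmax⟩ := exists_max_finite_normal hmax
  have hfinB : {M : Subgroup G | M ≤ R ∧ M ≠ ⊥}.Finite :=
    (finite_setOf_le_of_finite hRfin).subset (fun M hM => hM.1)
  set f : Subgroup G → G := fun M =>
    if h : ∃ g, g ∈ M ∧ g ≠ 1 then h.choose else 1 with hf
  have hfspec : ∀ M : Subgroup G, M ≠ ⊥ → f M ∈ M ∧ f M ≠ 1 := by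
    intro M hM
    have hex : ∃ g, g ∈ M ∧ g ≠ 1 := by
      by_contra hno
      push_neg at hno
      apply hM
      rw [eq_bot_iff]
      intro g hg
      rw [Subgroup.mem_bot]
      by_contra hg1
      exact hg1 (hno g hg)
    rw [hf]
    simp only [dif_pos hex]
    exact hex.choose_spec
  set F : Finset G := (hfinB.image f).toFinset with hFdef
  rw [cbD_succ] at h
  simp only [Set.mem_setOf_eq] at h
  rw [accPt_char hmax (fun _ h => h)] at h
  obtain ⟨K, hKcb, hKne, -, hKav⟩ := h F (by
    intro g hg
    rw [hFdef, Set.Finite.mem_toFinset] at hg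
    obtain ⟨M, hM, rfl⟩ := hg
    exact fun hmem => (hfspec M hM.2).2 (Subgroup.mem_bot.1 hmem))
  have hKfin : (K.1 : Set G).Finite := hallfin K hKcb
  have hKR : K.1 ≤ R := hRmax K.1 K.2 hKfin
  have hKbot : K.1 ≠ ⊥ := by
    intro hh
    exact hKne (by rw [hh]; rfl)
  have hKB : K.1 ∈ {M : Subgroup G | M ≤ R ∧ M ≠ ⊥} := ⟨hKR, hKbot⟩
  have hfK : f K.1 ∈ F := by
    rw [hFdef, Set.Finite.mem_toFinset]
    exact ⟨K.1, hKB, rfl⟩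
  exact hKav (f K.1) hfK (hfspec K.1 hKbot).1

end Master

section Transfer
variable {G : Type u} [Group G]

theorem cbD_transfer
    (hmax : WellFounded ((· > ·) :
      {N : Subgroup G // N.Normal} → {N : Subgroup G // N.Normal} → Prop))
    (N : Subgroup G) (α : Ordinal.{u}) :
    ∀ K : {K : Subgroup G // K.Normal ∧ N ≤ K},
      K ∈ cbD {K : Subgroup G // K.Normal ∧ N ≤ K} α ↔
      (⟨K.1, K.2.1⟩ : {K : Subgroup G // K.Normal}) ∈ cbD {K : Subgroup G // K.Normal} α := by
  induction α using Ordinal.limitRecOn with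
  | zero => intro K; rw [cbD_zero, cbD_zero]; simp
  | add_one o ih =>
    intro K
    rw [cbD_succ, cbD_succ]
    simp only [Set.mem_setOf_eq]
    rw [accPt_char hmax (fun _ h => h.1), accPt_char hmax (fun _ h => h)]
    constructor
    · intro h F hF
      obtain ⟨K', hK'cb, hne, hle, hav⟩ := h F hF
      exact ⟨⟨K'.1, K'.2.1⟩, (ih K').1 hK'cb, hne, hle, hav⟩
    · intro h F hF
      obtain ⟨K'', hK''cb, hne, hle, hav⟩ := h F hF
      refine ⟨⟨K''.1, K''.2, le_trans K.2.2 hle⟩, ?_, hne, hle, hav⟩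
      exact (ih ⟨K''.1, K''.2, le_trans K.2.2 hle⟩).2 hK''cb
  | limit o ho ih =>
    intro K
    rw [mem_cbD_limit ho, mem_cbD_limit ho]
    exact ⟨fun h β hβ => (ih β hβ K).1 (h β hβ), fun h β hβ => (ih β hβ K).2 (h β hβ)⟩

end Transfer

section Rank
universe v
variable {X : Type*} [TopologicalSpace X] [T1Space X]

theorem zero_mem_rankSet (x : X) : (0 : Ordinal.{v}) ∈ {α : Ordinal.{v} | x ∈ cbD X α} := by
  show x ∈ cbD X 0
  rw [cbD_zero]
  trivial

theorem rankSet_downward {x : X} {α β : Ordinal.{v}} (hle : α ≤ β)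
    (hβ : x ∈ cbD X β) : x ∈ cbD X α := cbD_antitone hle hβ

theorem sSup_mem_rankSet {x : X} (hbdd : BddAbove {α : Ordinal.{v} | x ∈ cbD X α}) :
    x ∈ cbD X (sSup {α : Ordinal.{v} | x ∈ cbD X α}) := by
  have hne : {α : Ordinal.{v} | x ∈ cbD X α}.Nonempty := ⟨0, zero_mem_rankSet x⟩
  rcases Ordinal.zero_or_succ_or_isSuccLimit (sSup {α : Ordinal.{v} | x ∈ cbD X α}) with
    h0 | ⟨a, ha⟩ | hlim
  · rw [h0]; exact zero_mem_rankSet x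
  · have halt : a < sSup {α : Ordinal.{v} | x ∈ cbD X α} := by rw [← ha]; exact Order.lt_succ a
    obtain ⟨γ, hγS, haγ⟩ := exists_lt_of_lt_csSup hne halt
    have h1 : sSup {α : Ordinal.{v} | x ∈ cbD X α} ≤ γ := by
      rw [← ha]; exact Order.succ_le_of_lt haγ
    have h2 : γ ≤ sSup {α : Ordinal.{v} | x ∈ cbD X α} := le_csSup hbdd hγS
    rw [le_antisymm h1 h2]
    exact hγS
  · rw [mem_cbD_limit hlim]
    intro β hβ
    obtain ⟨γ, hγS, hβγ⟩ := exists_lt_of_lt_csSup hne hβ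
    exact rankSet_downward hβγ.le hγS

theorem bddAbove_rankSet_of {x : X} {β : Ordinal.{v}} (hβ : x ∉ cbD X β) :
    BddAbove {α : Ordinal.{v} | x ∈ cbD X α} := by
  refine ⟨β, fun γ hγ => ?_⟩
  by_contra hlt
  push_neg at hlt
  exact hβ (rankSet_downward hlt.le hγ)

end Rank

end CBProof


/-- Let `G` be a group satisfying max-n (every increasing chain of normal
subgroups stabilizes, i.e. `>` is well-founded on `𝒩(G)`) such that every quotient of `G`
is residually finite (for every normal `N` and `g ∉ N` there is a normal subgroup `K ⊇ N`
of finite index with `g ∉ K`). Then `cb(G) = sup { cb(G/N) + 1 : N infinite normal }`,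
where `cb(G/N)` is the Cantor–Bendixson rank of the point `N` in the space
`{K ∈ 𝒩(G) : N ≤ K}`, which is canonically homeomorphic to `𝒩(G/N)`. -/
theorem cb_eq_sup_cb_quotients_of_maxn (G : Type u) [Group G]
    (hmax : WellFounded ((· > ·) :
      {N : Subgroup G // N.Normal} → {N : Subgroup G // N.Normal} → Prop))
    (hres : ∀ N : Subgroup G, N.Normal → ∀ g ∉ N,
      ∃ K : Subgroup G, K.Normal ∧ N ≤ K ∧ K.index ≠ 0 ∧ g ∉ K) :
    cbRank (nsBot G) =
      sSup {β : Ordinal.{u} | ∃ (N : Subgroup G) (hN : N.Normal), (N : Set G).Infinite ∧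
        β = cbRank (⟨N, hN, le_rfl⟩ : {K : Subgroup G // K.Normal ∧ N ≤ K}) + 1} := by
  classical
  set T : Set Ordinal.{u} :=
    {β : Ordinal.{u} | ∃ (N : Subgroup G) (hN : N.Normal), (N : Set G).Infinite ∧
      β = cbRank (⟨N, hN, le_rfl⟩ : {K : Subgroup G // K.Normal ∧ N ≤ K}) + 1} with hT
  -- the rank of any point of 𝒩(G⧸N) computed in 𝒩(G)
  have hrank_eq : ∀ (N : Subgroup G) (hN : N.Normal),
      cbRank (⟨N, hN, le_rfl⟩ : {K : Subgroup G // K.Normal ∧ N ≤ K}) =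
      sSup {α : Ordinal.{u} |
        (⟨N, hN⟩ : {K : Subgroup G // K.Normal}) ∈ cbD {K : Subgroup G // K.Normal} α} := by
    intro N hN
    unfold cbRank
    congr 1
    ext α
    exact CBProof.cbD_transfer hmax N α ⟨N, hN, le_rfl⟩
  have hbdd : ∀ x : {N : Subgroup G // N.Normal},
      BddAbove {α : Ordinal.{u} | x ∈ cbD {N : Subgroup G // N.Normal} α} := by
    intro x
    obtain ⟨β, hβ⟩ := CBProof.exists_not_mem_cbD hmax x
    exact CBProof.bddAbove_rankSet_of hβ
  have hbddbot := hbdd (nsBot G)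
  have hSbotne : {α : Ordinal.{u} | nsBot G ∈ cbD {N : Subgroup G // N.Normal} α}.Nonempty :=
    ⟨0, CBProof.zero_mem_rankSet _⟩
  -- every element of T is at most cbRank (nsBot G)
  have hTb : ∀ β ∈ T, β ≤
      sSup {α : Ordinal.{u} | nsBot G ∈ cbD {N : Subgroup G // N.Normal} α} := by
    rintro β ⟨N, hN, hNinf, rfl⟩
    rw [hrank_eq N hN]
    have hmem : (⟨N, hN⟩ : {K : Subgroup G // K.Normal}) ∈
        cbD {K : Subgroup G // K.Normal}
          (sSup {α : Ordinal.{u} |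
            (⟨N, hN⟩ : {K : Subgroup G // K.Normal}) ∈ cbD {K : Subgroup G // K.Normal} α}) :=
      CBProof.sSup_mem_rankSet (hbdd ⟨N, hN⟩)
    have hbot := CBProof.bot_mem_cbD_succ_of_infinite hmax hres
      (N := ⟨N, hN⟩) hNinf _ hmem
    exact le_csSup hbddbot hbot
  have hbddT : BddAbove T := ⟨_, hTb⟩
  unfold cbRank
  apply le_antisymm
  · -- key : every α below the rank of ⊥ gives an element of T above α
    have key : ∀ α : Ordinal.{u},
        α < sSup {α : Ordinal.{u} | nsBot G ∈ cbD {N : Subgroup G // N.Normal} α} →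
        α + 1 ≤ sSup T := by
      intro α hα
      obtain ⟨γ, hγS, hαγ⟩ := exists_lt_of_lt_csSup hSbotne hα
      have hsucc : α + 1 ≤ γ := by
        rw [Ordinal.add_one_eq_succ]; exact Order.succ_le_of_lt hαγ
      have hbotmem : nsBot G ∈ cbD {N : Subgroup G // N.Normal} (α + 1) :=
        CBProof.rankSet_downward hsucc hγS
      obtain ⟨N', hN'inf, hN'cb⟩ := CBProof.exists_infinite_of_bot_mem hmax α hbotmem
      have hmemT : (sSup {α : Ordinal.{u} |
          N' ∈ cbD {K : Subgroup G // K.Normal} α} + 1) ∈ T := by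
        refine ⟨N'.1, N'.2, hN'inf, ?_⟩
        rw [hrank_eq N'.1 N'.2]
      have hle1 : α ≤ sSup {α : Ordinal.{u} | N' ∈ cbD {K : Subgroup G // K.Normal} α} :=
        le_csSup (hbdd N') hN'cb
      calc α + 1 ≤ sSup {α : Ordinal.{u} | N' ∈ cbD {K : Subgroup G // K.Normal} α} + 1 :=
            add_le_add_left hle1 1
        _ ≤ sSup T := le_csSup hbddT hmemT
    by_contra hcon
    push_neg at hcon
    have h2 : sSup T < sSup T + 1 := by
      rw [Ordinal.add_one_eq_succ]; exact Order.lt_succ _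
    exact absurd (lt_of_lt_of_le h2 (key _ hcon)) (lt_irrefl _)
  · rcases T.eq_empty_or_nonempty with hTe | hTne
    · rw [hTe, csSup_empty]
      exact bot_le
    · exact csSup_le hTne hTb
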